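/- Let c, θ ∈ ℝ, σ > 0, α, β > 0, let Z be a standard Gaussian random variable, and let V be a Gamma(α, β) distributed random variable independent of Z. Then the law of the Variance Gamma variable X = c + θV + σ√V · Z is absolutely continuous with respect to Lebesgue measure, with density f_X(x) = ∫₀^∞ (1/√(2πσ²v)) exp(−(x − c − θv)²/(2σ²v)) · (β^α/Γ(α)) v^{α−1} e^{−βv} dv. -/

import Mathlib

open MeasureTheory ProbabilityTheory Real

/-- The law of the Variance Gamma variable `X = c + θV + σ√V ⬝ Z` is
absolutely continuous with respect to Lebesgue measure, with the mixture density
`x ↦ ∫₀^∞ (1/√(2πσ²v)) exp(-(x - c - θv)²/(2σ²v)) ⬝ (β^α/Γ(α)) v^(α-1) e^(-βv) dv`. -/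
theorem varianceGamma_density
    {Ω : Type*} [MeasurableSpace Ω] (P : Measure Ω) [IsProbabilityMeasure P]
    (α β c θ σ : ℝ) (hα : 0 < α) (hβ : 0 < β) (hσ : 0 < σ)
    (V Z : Ω → ℝ) (hVm : Measurable V) (hZm : Measurable Z)
    (hV : Measure.map V P = gammaMeasure α β)
    (hZ : Measure.map Z P = gaussianReal 0 1)
    (hindep : IndepFun V Z P) :
    Measure.map (fun ω => c + θ * V ω + σ * Real.sqrt (V ω) * Z ω) P
      = volume.withDensity (fun x => ENNReal.ofReal
          (∫ v in Set.Ioi (0 : ℝ),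
            (1 / Real.sqrt (2 * π * σ ^ 2 * v))
              * Real.exp (-(x - c - θ * v) ^ 2 / (2 * σ ^ 2 * v))
              * (β ^ α / Real.Gamma α) * v ^ (α - 1) * Real.exp (-β * v))) := by
  have hΓP : IsProbabilityMeasure (gammaMeasure α β) := isProbabilityMeasure_gammaMeasure hα hβ
  set ν : Measure ℝ := gaussianReal 0 1 with hν
  set μ : Measure ℝ := gammaMeasure α β with hμ
  -- the real mixture integrand
  set g : ℝ → ℝ → ℝ := fun x v =>
    (1 / Real.sqrt (2 * π * σ ^ 2 * v))
      * Real.exp (-(x - c - θ * v) ^ 2 / (2 * σ ^ 2 * v))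
      * (β ^ α / Real.Gamma α) * v ^ (α - 1) * Real.exp (-β * v) with hg
  -- the ENNReal kernel
  set K : ℝ → ℝ → ENNReal := fun v x =>
    gammaPDF α β v * gaussianPDF (c + θ * v) ((σ ^ 2 * v).toNNReal) x with hK
  have hKm : Measurable (Function.uncurry K) := by
    refine Measurable.mul (f := fun p : ℝ × ℝ => gammaPDF α β p.1)
      (g := fun p : ℝ × ℝ => gaussianPDF (c + θ * p.1) ((σ ^ 2 * p.1).toNNReal) p.2) ?_ ?_
    · exact ((measurable_gammaPDFReal α β).ennreal_ofReal).comp measurable_fst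
    · simp only [gaussianPDF, gaussianPDFReal, Real.coe_toNNReal']
      apply Measurable.ennreal_ofReal
      fun_prop
  have hKm' : Measurable fun p : ℝ × ℝ => K p.2 p.1 :=
    hKm.comp measurable_swap
  -- variance is nonzero for v > 0
  have hvar : ∀ v : ℝ, 0 < v → ((σ ^ 2 * v).toNNReal) ≠ 0 := fun v hv => by
    simp only [ne_eq, Real.toNNReal_eq_zero, not_le]
    positivity
  -- pointwise identification of the kernel with the real integrand
  have hKg : ∀ x v : ℝ, 0 < v → K v x = ENNReal.ofReal (g x v) := by
    intro x v hv
    rw [hK, hg]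
    simp only
    rw [gammaPDF_of_nonneg hv.le, gaussianPDF, ← ENNReal.ofReal_mul (by
      have := Real.Gamma_pos_of_pos hα
      positivity)]
    congr 1
    rw [gaussianPDFReal, Real.coe_toNNReal _ (by positivity),
      show x - (c + θ*v) = x - c - θ*v by ring,
      show (2:ℝ)*π*(σ^2*v) = 2*π*σ^2*v by ring,
      show (2:ℝ)*(σ^2*v) = 2*σ^2*v by ring, neg_mul]
    ring
  -- conditional law for v > 0
  have hmapv : ∀ v : ℝ, 0 < v →
      Measure.map (fun z => c + θ*v + σ*Real.sqrt v * z) ν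
        = gaussianReal (c + θ*v) ((σ^2*v).toNNReal) := by
    intro v hv
    have hcomp : (fun z : ℝ => c + θ*v + σ*Real.sqrt v * z)
        = (fun x => x + (c + θ*v)) ∘ ((σ*Real.sqrt v) * ·) := by
      funext z; simp [Function.comp]; ring
    rw [hν, hcomp, ← Measure.map_map (measurable_add_const _) (measurable_const_mul _),
      gaussianReal_map_const_mul, gaussianReal_map_add_const]
    congr 1
    · ring
    · rw [mul_one]
      refine NNReal.coe_injective ?_
      rw [Real.coe_toNNReal _ (by positivity)]
      simp [mul_pow, Real.sq_sqrt hv.le]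
  -- the map function on the product space
  set f : ℝ × ℝ → ℝ := fun p => c + θ * p.1 + σ * Real.sqrt p.1 * p.2 with hf
  have hfm : Measurable f := by fun_prop
  have hpairm : Measurable (fun ω => (V ω, Z ω)) := hVm.prodMk hZm
  have hjoint : Measure.map (fun ω => (V ω, Z ω)) P = μ.prod ν := by
    rw [← hV, ← hZ]
    exact (indepFun_iff_map_prod_eq_prod_map_map hVm.aemeasurable hZm.aemeasurable).mp hindep
  have hmapX : Measure.map (fun ω => c + θ * V ω + σ * Real.sqrt (V ω) * Z ω) P
      = Measure.map f (μ.prod ν) := by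
    rw [← hjoint, Measure.map_map hfm hpairm]; rfl
  rw [hmapX]
  -- the mixture density (ENNReal-valued)
  set H : ℝ → ENNReal := fun x => ∫⁻ v in Set.Ioi (0:ℝ), K v x with hH
  have hHm : Measurable H :=
    Measurable.lintegral_prod_right' (f := fun p : ℝ × ℝ => K p.2 p.1) hKm'
  -- H is a.e. finite
  have hHfin : ∫⁻ x, H x ∂volume ≠ ⊤ := by
    have hswap : ∫⁻ x, H x ∂volume
        = ∫⁻ v in Set.Ioi (0:ℝ), ∫⁻ x, K v x ∂volume ∂volume := by
      rw [hH]
      exact (lintegral_lintegral_swap (hKm.aemeasurable)).symm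
    rw [hswap]
    have h1 : ∫⁻ v in Set.Ioi (0:ℝ), ∫⁻ x, K v x ∂volume ∂volume
        = ∫⁻ v in Set.Ioi (0:ℝ), gammaPDF α β v ∂volume := by
      refine setLIntegral_congr_fun_ae measurableSet_Ioi (ae_of_all _ fun v hv => ?_)
      rw [hK]
      simp only
      rw [lintegral_const_mul _ (measurable_gaussianPDF _ _),
        lintegral_gaussianPDF_eq_one _ (hvar v hv), mul_one]
    rw [h1]
    refine ne_top_of_le_ne_top ?_ (setLIntegral_le_lintegral _ _)
    rw [lintegral_gammaPDF_eq_one hα hβ]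
    exact ENNReal.one_ne_top
  have haefin : ∀ᵐ x ∂(volume : Measure ℝ), H x < ⊤ := ae_lt_top hHm hHfin
  -- a.e. identification of the density
  have hgm : ∀ x : ℝ, AEStronglyMeasurable (g x) (volume.restrict (Set.Ioi 0)) := by
    intro x
    apply Measurable.aestronglyMeasurable
    rw [hg]
    simp only
    fun_prop
  have key : ∀ᵐ x ∂(volume : Measure ℝ),
      ENNReal.ofReal (∫ v in Set.Ioi (0:ℝ), g x v) = H x := by
    filter_upwards [haefin] with x hx
    have hH' : H x = ∫⁻ v in Set.Ioi (0:ℝ), ENNReal.ofReal (g x v) := by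
      rw [hH]
      exact setLIntegral_congr_fun_ae measurableSet_Ioi (ae_of_all _ fun v hv => hKg x v hv)
    have hnn : 0 ≤ᵐ[volume.restrict (Set.Ioi (0:ℝ))] g x := by
      filter_upwards [ae_restrict_mem measurableSet_Ioi] with v hv
      have hv' : (0:ℝ) < v := hv
      have h1 : (0:ℝ) < Real.Gamma α := Real.Gamma_pos_of_pos hα
      rw [hg]
      simp only [Pi.zero_apply]
      positivity
    rw [integral_eq_lintegral_of_nonneg_ae hnn (hgm x), ← hH', ENNReal.ofReal_toReal hx.ne]
  -- now compute the map of the product measure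
  ext s hs
  rw [Measure.map_apply hfm hs, withDensity_apply _ hs]
  have hSm : MeasurableSet (f ⁻¹' s) := hfm hs
  rw [Measure.prod_apply hSm]
  have hsect : Measurable fun v => ν (Prod.mk v ⁻¹' (f ⁻¹' s)) :=
    measurable_measure_prodMk_left hSm
  rw [hμ, gammaMeasure, lintegral_withDensity_eq_lintegral_mul _
    (show Measurable (gammaPDF α β) from (measurable_gammaPDFReal α β).ennreal_ofReal) hsect]
  -- restrict to Ioi 0
  rw [← lintegral_add_compl (fun v => (gammaPDF α β * fun v => ν (Prod.mk v ⁻¹' (f ⁻¹' s))) v)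
    measurableSet_Ioi]
  have hcompl : ∫⁻ v in (Set.Ioi (0:ℝ))ᶜ,
      (gammaPDF α β * fun v => ν (Prod.mk v ⁻¹' (f ⁻¹' s))) v = 0 := by
    rw [Set.compl_Ioi, setLIntegral_congr Iio_ae_eq_Iic.symm,
      setLIntegral_congr_fun_ae measurableSet_Iio
        (ae_of_all _ fun v (hv : v < 0) =>
          show (gammaPDF α β * fun v => ν (Prod.mk v ⁻¹' (f ⁻¹' s))) v = 0 by
            simp [gammaPDF_of_neg hv])]
    simp
  rw [hcompl, add_zero]
  -- identify the section integral for v > 0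
  have hsect' : ∀ v ∈ Set.Ioi (0:ℝ),
      (gammaPDF α β * fun v => ν (Prod.mk v ⁻¹' (f ⁻¹' s))) v = ∫⁻ x in s, K v x := by
    intro v hv
    have hv' : (0:ℝ) < v := hv
    have hzm : Measurable fun z : ℝ => c + θ*v + σ*Real.sqrt v * z := by fun_prop
    have h1 : ν (Prod.mk v ⁻¹' (f ⁻¹' s))
        = ∫⁻ x in s, gaussianPDF (c + θ*v) ((σ^2*v).toNNReal) x := by
      have : Prod.mk v ⁻¹' (f ⁻¹' s) = (fun z => c + θ*v + σ*Real.sqrt v * z) ⁻¹' s := rfl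
      rw [this, ← Measure.map_apply hzm hs, hmapv v hv',
        gaussianReal_apply _ (hvar v hv')]
    simp only [Pi.mul_apply]
    rw [h1, hK]
    exact (lintegral_const_mul _ (measurable_gaussianPDF _ _)).symm
  rw [setLIntegral_congr_fun_ae measurableSet_Ioi (ae_of_all _ hsect')]
  -- swap the order of integration
  rw [lintegral_lintegral_swap hKm.aemeasurable]
  exact (lintegral_congr_ae (ae_restrict_of_ae key)).symm
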